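/- Let (e_n)_{n≥1} and (d_n)_{n≥1} be nonnegative adapted processes on a filtered probability space that are tangent, i.e., for all n ≥ 1 and all t ∈ ℝ, almost surely P(e_n ≥ t | F_{n−1}) = P(d_n ≥ t | F_{n−1}). Then for every p ∈ (0,1], E[(∑_{n≥1} e_n)^p] ≤ 6 · E[(∑_{n≥1} d_n)^p]. -/

import Mathlib

open MeasureTheory Filter Set
open scoped ENNReal

namespace Stmt3Aux

lemma indicator_le_apply {Ω : Type*} (s : Set Ω) (f : Ω → ℝ≥0∞) (x : Ω) :
    s.indicator f x ≤ f x := by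
  by_cases h : x ∈ s
  · rw [Set.indicator_of_mem h]
  · rw [Set.indicator_of_notMem h]; exact zero_le

lemma min_sum_le (m : ℕ) (a : ℕ → ℝ≥0∞) (L : ℝ≥0∞) :
    min (∑ i ∈ Finset.range m, a i) L ≤ ∑ i ∈ Finset.range m, min (a i) L := by
  by_cases h : ∀ i ∈ Finset.range m, a i ≤ L
  · refine le_trans (min_le_left _ _)
      (le_of_eq (Finset.sum_congr rfl fun i hi => (min_eq_left (h i hi)).symm))
  · push_neg at h
    obtain ⟨i, hi, hL⟩ := h
    calc min (∑ i ∈ Finset.range m, a i) L ≤ L := min_le_right _ _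
    _ = min (a i) L := (min_eq_right hL.le).symm
    _ ≤ _ := Finset.single_le_sum (f := fun j => min (a j) L) (fun j _ => zero_le) hi

lemma iSup_min_nat (w : ℝ≥0∞) : (⨆ n : ℕ, min w (n : ℝ≥0∞)) = w := by
  refine le_antisymm (iSup_le fun n => min_le_left _ _) ?_
  rcases eq_or_ne w ⊤ with h | h
  · rw [h]
    calc (⊤ : ℝ≥0∞) = ⨆ n : ℕ, (n : ℝ≥0∞) := ENNReal.iSup_natCast.symm
    _ ≤ _ := iSup_mono fun n => le_of_eq (min_eq_right (le_top : (n:ℝ≥0∞) ≤ ⊤)).symm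
  · obtain ⟨n, hn⟩ := ENNReal.exists_nat_gt h
    exact le_iSup_of_le n (le_of_eq (min_eq_left hn.le).symm)

lemma lintegral_eq_iSup_min {Ω : Type*} [MeasurableSpace Ω] (μ : Measure Ω)
    (W : Ω → ℝ≥0∞) (hW : Measurable W) :
    ∫⁻ x, W x ∂μ = ⨆ n : ℕ, ∫⁻ x, min (W x) (n : ℝ≥0∞) ∂μ := by
  rw [← lintegral_iSup (fun n => hW.min measurable_const)
      (fun i j hij x => min_le_min le_rfl (Nat.cast_le.2 hij))]
  exact lintegral_congr fun x => (iSup_min_nat (W x)).symm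


lemma step {Ω : Type*} {m0 : MeasurableSpace Ω} (μ : Measure Ω)
    (F : Filtration ℕ m0) (a b : ℕ → Ω → ℝ≥0∞)
    (haF : ∀ i n, i < n → Measurable[F n] (a i)) (hbF : ∀ i n, i < n → Measurable[F n] (b i))
    (ha0 : ∀ i, Measurable (a i)) (hb0 : ∀ i, Measurable (b i))
    (L : ℝ≥0∞) (hL0 : 0 < L)
    (hkey : ∀ n (G : Set Ω), MeasurableSet[F n] G →
      ∫⁻ x in G, min (a n x) L ∂μ = ∫⁻ x in G, min (b n x) L ∂μ) :
    ∫⁻ x, min (∑' n, a n x) L ∂μ ≤ 3 * ∫⁻ x, min (∑' n, b n x) L ∂μ := by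
  classical
  set Sp : ℕ → Ω → ℝ≥0∞ := fun n x => ∑ i ∈ Finset.range n, a i x with hSp
  set Tp : ℕ → Ω → ℝ≥0∞ := fun n x => ∑ i ∈ Finset.range n, b i x with hTp
  set S : Ω → ℝ≥0∞ := fun x => ∑' n, a n x with hS
  set T : Ω → ℝ≥0∞ := fun x => ∑' n, b n x with hT
  have hSple : ∀ n x, Sp n x ≤ S x := fun n x => ENNReal.sum_le_tsum _
  have hTple : ∀ n x, Tp n x ≤ T x := fun n x => ENNReal.sum_le_tsum _
  have hTpmono : ∀ x {i j : ℕ}, i ≤ j → Tp i x ≤ Tp j x := fun x i j h =>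
    Finset.sum_le_sum_of_subset (Finset.range_subset_range.2 h)
  set G : ℕ → Set Ω := fun n => {x | Sp n x < L} ∩ {x | Tp n x < L} with hG
  have hGF : ∀ n, MeasurableSet[F n] (G n) := by
    intro n
    have hSm : Measurable[F n] (Sp n) :=
      Finset.measurable_sum _ (fun i hi => haF i n (Finset.mem_range.1 hi))
    have hTm : Measurable[F n] (Tp n) :=
      Finset.measurable_sum _ (fun i hi => hbF i n (Finset.mem_range.1 hi))
    exact (measurableSet_lt hSm measurable_const).inter (measurableSet_lt hTm measurable_const)
  have hGm : ∀ n, MeasurableSet (G n) := fun n => F.le n _ (hGF n)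
  set U : Ω → ℝ≥0∞ := fun x => ∑' n, (G n).indicator (fun y => min (a n y) L) x with hU
  set V : Ω → ℝ≥0∞ := fun x => ∑' n, (G n).indicator (fun y => min (b n y) L) x with hV
  -- equality of integrals of U and V
  have hUV : ∫⁻ x, U x ∂μ = ∫⁻ x, V x ∂μ := by
    rw [hU, hV,
      lintegral_tsum (fun n => (((ha0 n).min measurable_const).indicator (hGm n)).aemeasurable),
      lintegral_tsum (fun n => (((hb0 n).min measurable_const).indicator (hGm n)).aemeasurable)]
    refine tsum_congr fun n => ?_
    rw [lintegral_indicator (hGm n), lintegral_indicator (hGm n)]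
    exact hkey n (G n) (hGF n)
  -- pointwise bound for V
  have hVle : ∀ x, V x ≤ 2 * min (T x) L := by
    intro x
    by_cases hc : ∀ N, Tp N x < L
    · have hTle : T x ≤ L := by
        rw [hT]
        simp only []
        rw [ENNReal.tsum_eq_iSup_nat]
        exact iSup_le fun n => (hc n).le
      have h1 : V x ≤ T x := by
        calc V x ≤ ∑' n, min (b n x) L :=
              ENNReal.tsum_le_tsum fun n => indicator_le_apply _ _ x
        _ ≤ ∑' n, b n x := ENNReal.tsum_le_tsum fun n => min_le_left _ _
        _ = T x := rfl
      rw [min_eq_left hTle]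
      exact h1.trans (le_mul_of_one_le_left zero_le one_le_two)
    · push_neg at hc
      obtain ⟨N, hN⟩ := hc
      have hex : ∃ n, L ≤ Tp n x := ⟨N, hN⟩
      set m := Nat.find hex with hm_def
      have hm : L ≤ Tp m x := Nat.find_spec hex
      have hlt : ∀ k < m, Tp k x < L := fun k hk => lt_of_not_ge (Nat.find_min hex hk)
      have hm0 : m ≠ 0 := by
        intro h0
        rw [h0] at hm
        simp [hTp] at hm
        exact absurd hm (by simpa using hL0.ne')
      obtain ⟨m', hm'⟩ := Nat.exists_eq_succ_of_ne_zero hm0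
      have hTL : min (T x) L = L := min_eq_right (hm.trans (hTple _ x))
      have hVsum : V x = ∑ n ∈ Finset.range (m' + 1),
          (G n).indicator (fun y => min (b n y) L) x := by
        rw [hV]
        refine tsum_eq_sum ?_
        intro n hn
        have hnm : m' + 1 ≤ n := by simpa using hn
        apply Set.indicator_of_notMem
        intro hxG
        have h1 : Tp n x < L := hxG.2
        have h2 : L ≤ Tp n x := hm.trans (by rw [hm']; exact hTpmono x hnm)
        exact absurd h1 (not_lt.2 h2)
      rw [hVsum, Finset.sum_range_succ, hTL, two_mul]
      have h1 : ∑ n ∈ Finset.range m', (G n).indicator (fun y => min (b n y) L) x ≤ Tp m' x :=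
        Finset.sum_le_sum fun n _ => (indicator_le_apply _ _ x).trans (min_le_left _ _)
      have h2 : (G m').indicator (fun y => min (b m' y) L) x ≤ L :=
        (indicator_le_apply _ _ x).trans (min_le_right _ _)
      have h3 : Tp m' x ≤ L := (hlt m' (by rw [hm']; exact Nat.lt_succ_self m')).le
      exact add_le_add (h1.trans h3) h2
  -- pointwise bound for min S L
  have hSle : ∀ x, min (S x) L ≤ min (T x) L + U x := by
    intro x
    by_cases hcT : ∀ N, Tp N x < L
    · by_cases hcS : ∀ N, Sp N x < L
      · have hmem : ∀ n, x ∈ G n := fun n => ⟨hcS n, hcT n⟩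
        have haL : ∀ n, a n x ≤ L := by
          intro n
          have h1 : a n x ≤ Sp (n + 1) x :=
            Finset.single_le_sum (f := fun i => a i x) (fun i _ => zero_le)
              (Finset.self_mem_range_succ n)
          exact h1.trans (hcS (n + 1)).le
        have hSU : S x ≤ U x := by
          refine ENNReal.tsum_le_tsum fun n => ?_
          rw [Set.indicator_of_mem (hmem n)]
          exact le_of_eq (min_eq_left (haL n)).symm
        exact ((min_le_left _ _).trans hSU).trans le_add_self
      · push_neg at hcS
        obtain ⟨N, hN⟩ := hcS
        have hex : ∃ n, L ≤ Sp n x := ⟨N, hN⟩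
        set m := Nat.find hex with hm_def
        have hm : L ≤ Sp m x := Nat.find_spec hex
        have hlt : ∀ k < m, Sp k x < L := fun k hk => lt_of_not_ge (Nat.find_min hex hk)
        have hLU : L ≤ U x := by
          calc L = min (Sp m x) L := (min_eq_right hm).symm
          _ ≤ ∑ n ∈ Finset.range m, min (a n x) L := min_sum_le m _ L
          _ ≤ ∑ n ∈ Finset.range m, (G n).indicator (fun y => min (a n y) L) x := by
              refine Finset.sum_le_sum fun n hn => ?_
              have hx : x ∈ G n := ⟨hlt n (Finset.mem_range.1 hn), hcT n⟩
              rw [Set.indicator_of_mem hx]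
          _ ≤ U x := ENNReal.sum_le_tsum _
        exact ((min_le_right _ _).trans hLU).trans le_add_self
    · push_neg at hcT
      obtain ⟨N, hN⟩ := hcT
      have hLT : L ≤ T x := hN.trans (hTple N x)
      rw [min_eq_right hLT]
      exact (min_le_right _ _).trans le_self_add
  -- conclusion
  have hTmeas : Measurable T := Measurable.ennreal_tsum hb0
  calc ∫⁻ x, min (S x) L ∂μ ≤ ∫⁻ x, (min (T x) L + U x) ∂μ := lintegral_mono hSle
  _ = ∫⁻ x, min (T x) L ∂μ + ∫⁻ x, U x ∂μ :=
      lintegral_add_left (hTmeas.min measurable_const) _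
  _ = ∫⁻ x, min (T x) L ∂μ + ∫⁻ x, V x ∂μ := by rw [hUV]
  _ ≤ ∫⁻ x, min (T x) L ∂μ + ∫⁻ x, 2 * min (T x) L ∂μ :=
      add_le_add_right (lintegral_mono hVle) _
  _ = ∫⁻ x, min (T x) L ∂μ + 2 * ∫⁻ x, min (T x) L ∂μ := by
      rw [lintegral_const_mul' 2 _ (by norm_num)]
  _ = 3 * ∫⁻ x, min (T x) L ∂μ := by ring


lemma I1 {p : ℝ} (hp0 : 0 < p) (c : ℝ) (hc : 0 < c) :
    ∫⁻ l in Ioc (0:ℝ) c, ENNReal.ofReal (l ^ (p - 1)) = ENNReal.ofReal (c ^ p / p) := by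
  have hint : IntegrableOn (fun l : ℝ => l ^ (p - 1)) (Ioc 0 c) := by
    have h := intervalIntegral.intervalIntegrable_rpow' (a := 0) (b := c) (r := p - 1)
      (by linarith)
    rwa [intervalIntegrable_iff_integrableOn_Ioc_of_le hc.le] at h
  rw [← ofReal_integral_eq_lintegral_ofReal hint
      ((ae_restrict_iff' measurableSet_Ioc).2
        (ae_of_all _ fun l hl => Real.rpow_nonneg hl.1.le _))]
  congr 1
  rw [← intervalIntegral.integral_of_le hc.le,
    integral_rpow (Or.inl (by linarith : (-1:ℝ) < p - 1))]
  have hpp : p - 1 + 1 = p := by ring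
  rw [hpp, Real.zero_rpow hp0.ne', sub_zero]

lemma I2 {p : ℝ} (hp1 : p < 1) (c : ℝ) (hc : 0 < c) :
    ∫⁻ l in Ioi c, ENNReal.ofReal (l ^ (p - 2)) = ENNReal.ofReal (c ^ (p - 1) / (1 - p)) := by
  have hint : IntegrableOn (fun l : ℝ => l ^ (p - 2)) (Ioi c) :=
    integrableOn_Ioi_rpow_of_lt (by linarith) hc
  rw [← ofReal_integral_eq_lintegral_ofReal hint
      ((ae_restrict_iff' measurableSet_Ioi).2
        (ae_of_all _ fun l hl => Real.rpow_nonneg ((hc.trans hl).le) _))]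
  rw [integral_Ioi_rpow_of_lt (by linarith) hc]
  congr 1
  have hpp : p - 2 + 1 = p - 1 := by ring
  rw [hpp]
  have h1p : (1:ℝ) - p ≠ 0 := by linarith
  have h1p' : p - 1 ≠ 0 := by linarith
  field_simp
  ring

lemma rep {p : ℝ} (hp0 : 0 < p) (hp1 : p < 1) (y : ℝ≥0∞) :
    y ^ p = ENNReal.ofReal (p * (1 - p)) *
      ∫⁻ l in Ioi (0:ℝ), min y (ENNReal.ofReal l) * ENNReal.ofReal (l ^ (p - 2)) := by
  have hmul : ∀ l : ℝ, 0 < l → ENNReal.ofReal l * ENNReal.ofReal (l ^ (p - 2))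
      = ENNReal.ofReal (l ^ (p - 1)) := by
    intro l hl
    rw [← ENNReal.ofReal_mul hl.le]
    congr 1
    have h := Real.rpow_add hl 1 (p - 2)
    rw [Real.rpow_one] at h
    rw [← h]
    congr 1
    ring
  rcases eq_or_ne y ⊤ with rfl | hytop
  · rw [ENNReal.top_rpow_of_pos hp0]
    have hJ : ∫⁻ l in Ioi (0:ℝ), min ⊤ (ENNReal.ofReal l) * ENNReal.ofReal (l ^ (p - 2)) = ⊤ := by
      have hcong : ∫⁻ l in Ioi (0:ℝ), min ⊤ (ENNReal.ofReal l) * ENNReal.ofReal (l ^ (p - 2))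
          = ∫⁻ l in Ioi (0:ℝ), ENNReal.ofReal (l ^ (p - 1)) := by
        refine setLIntegral_congr_fun measurableSet_Ioi (fun l hl => ?_)
        rw [min_eq_right le_top, hmul l hl]
      rw [hcong]
      refine eq_top_iff.2 (ENNReal.le_of_forall_nnreal_lt fun r _ => ?_)
      have htend : Tendsto (fun n : ℕ => ((n : ℝ) + 1) ^ p / p) atTop atTop :=
        ((tendsto_rpow_atTop hp0).comp
          (tendsto_atTop_add_const_right _ 1 tendsto_natCast_atTop_atTop)).atTop_div_const hp0
      obtain ⟨n, hn⟩ := (htend.eventually_ge_atTop (r : ℝ)).exists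
      calc (r : ℝ≥0∞) = ENNReal.ofReal (r : ℝ) := ENNReal.ofReal_coe_nnreal.symm
      _ ≤ ENNReal.ofReal (((n : ℝ) + 1) ^ p / p) := ENNReal.ofReal_le_ofReal hn
      _ = ∫⁻ l in Ioc (0:ℝ) ((n : ℝ) + 1), ENNReal.ofReal (l ^ (p - 1)) :=
          (I1 hp0 _ (by positivity)).symm
      _ ≤ ∫⁻ l in Ioi (0:ℝ), ENNReal.ofReal (l ^ (p - 1)) :=
          lintegral_mono_set (fun z hz => hz.1)
    rw [hJ, ENNReal.mul_top (by
      simp only [ne_eq, ENNReal.ofReal_eq_zero, not_le]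
      nlinarith)]
  · rcases eq_or_ne y 0 with rfl | hy0
    · rw [ENNReal.zero_rpow_of_pos hp0]
      have hz : ∀ l : ℝ, min (0:ℝ≥0∞) (ENNReal.ofReal l) * ENNReal.ofReal (l ^ (p - 2)) = 0 := by
        intro l
        rw [min_eq_left zero_le, zero_mul]
      rw [lintegral_congr hz, lintegral_zero, mul_zero]
    · set c := y.toReal with hc_def
      have hc : 0 < c := ENNReal.toReal_pos hy0 hytop
      have hy : y = ENNReal.ofReal c := (ENNReal.ofReal_toReal hytop).symm
      rw [hy]
      have hsplit : (Ioi (0:ℝ)) = Ioc 0 c ∪ Ioi c := (Ioc_union_Ioi_eq_Ioi hc.le).symm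
      rw [hsplit, lintegral_union measurableSet_Ioi (Ioc_disjoint_Ioi le_rfl)]
      have hA : ∫⁻ l in Ioc (0:ℝ) c,
          min (ENNReal.ofReal c) (ENNReal.ofReal l) * ENNReal.ofReal (l ^ (p - 2))
          = ENNReal.ofReal (c ^ p / p) := by
        rw [← I1 hp0 c hc]
        refine setLIntegral_congr_fun measurableSet_Ioc (fun l hl => ?_)
        rw [min_eq_right (ENNReal.ofReal_le_ofReal hl.2), hmul l hl.1]
      have hB : ∫⁻ l in Ioi c,
          min (ENNReal.ofReal c) (ENNReal.ofReal l) * ENNReal.ofReal (l ^ (p - 2))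
          = ENNReal.ofReal (c ^ p / (1 - p)) := by
        have hcong : ∀ l ∈ Ioi c,
            min (ENNReal.ofReal c) (ENNReal.ofReal l) * ENNReal.ofReal (l ^ (p - 2))
            = ENNReal.ofReal c * ENNReal.ofReal (l ^ (p - 2)) := fun l hl => by
          rw [min_eq_left (ENNReal.ofReal_le_ofReal (le_of_lt hl))]
        rw [setLIntegral_congr_fun measurableSet_Ioi hcong,
          lintegral_const_mul' _ _ ENNReal.ofReal_ne_top, I2 hp1 c hc,
          ← ENNReal.ofReal_mul hc.le]
        congr 1
        have h := Real.rpow_add hc 1 (p - 1)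
        rw [Real.rpow_one] at h
        have h1 : c * c ^ (p - 1) = c ^ p := by
          rw [← h]; congr 1; ring
        rw [← h1]; ring
      rw [hA, hB, ← ENNReal.ofReal_add (by positivity)
        (div_nonneg (Real.rpow_nonneg hc.le _) (by linarith)),
        ← ENNReal.ofReal_mul (by nlinarith : (0:ℝ) ≤ p * (1 - p)),
        ENNReal.ofReal_rpow_of_pos hc]
      congr 1
      have h1p : (1:ℝ) - p ≠ 0 := by linarith
      field_simp
      ring


lemma rep_int {Ω : Type*} [MeasurableSpace Ω] (μ : Measure Ω) [SFinite μ]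
    {p : ℝ} (hp0 : 0 < p) (hp1 : p < 1) (W : Ω → ℝ≥0∞) (hW : Measurable W) :
    ∫⁻ x, (W x) ^ p ∂μ = ENNReal.ofReal (p * (1 - p)) *
      ∫⁻ l in Ioi (0:ℝ),
        (∫⁻ x, min (W x) (ENNReal.ofReal l) ∂μ) * ENNReal.ofReal (l ^ (p - 2)) := by
  have hmeas : AEMeasurable (Function.uncurry fun x (l : ℝ) =>
      min (W x) (ENNReal.ofReal l) * ENNReal.ofReal (l ^ (p - 2)))
      (μ.prod (volume.restrict (Ioi 0))) := by
    refine Measurable.aemeasurable ?_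
    exact ((hW.comp measurable_fst).min
        (ENNReal.measurable_ofReal.comp measurable_snd)).mul
      (ENNReal.measurable_ofReal.comp (measurable_snd.pow_const (p-2) |>.comp measurable_id))
  calc ∫⁻ x, (W x) ^ p ∂μ
      = ∫⁻ x, (ENNReal.ofReal (p * (1 - p)) *
          ∫⁻ l in Ioi (0:ℝ), min (W x) (ENNReal.ofReal l) * ENNReal.ofReal (l ^ (p - 2))) ∂μ :=
        lintegral_congr fun x => rep hp0 hp1 (W x)
  _ = ENNReal.ofReal (p * (1 - p)) * ∫⁻ x, (∫⁻ l in Ioi (0:ℝ),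
        min (W x) (ENNReal.ofReal l) * ENNReal.ofReal (l ^ (p - 2))) ∂μ :=
        lintegral_const_mul' _ _ ENNReal.ofReal_ne_top
  _ = ENNReal.ofReal (p * (1 - p)) * ∫⁻ l in Ioi (0:ℝ), ∫⁻ x,
        min (W x) (ENNReal.ofReal l) * ENNReal.ofReal (l ^ (p - 2)) ∂μ := by
        rw [lintegral_lintegral_swap hmeas]
  _ = ENNReal.ofReal (p * (1 - p)) * ∫⁻ l in Ioi (0:ℝ),
        (∫⁻ x, min (W x) (ENNReal.ofReal l) ∂μ) * ENNReal.ofReal (l ^ (p - 2)) := by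
        congr 1
        exact lintegral_congr fun l => lintegral_mul_const' _ _ ENNReal.ofReal_ne_top


end Stmt3Aux

open Stmt3Aux in
/-- Comparison of `L^p` norms (for `p ∈ (0,1]`) of sums of two nonnegative adapted
tangent processes: `E[(∑_{n≥1} e_n)^p] ≤ 6 E[(∑_{n≥1} d_n)^p]`. -/
theorem stmt3 {Ω : Type*} {m0 : MeasurableSpace Ω} (μ : Measure Ω) [IsProbabilityMeasure μ]
    (F : Filtration ℕ m0) (e d : ℕ → Ω → ℝ)
    (he_nonneg : ∀ n x, 0 ≤ e n x) (hd_nonneg : ∀ n x, 0 ≤ d n x)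
    (he_adapted : Adapted F e) (hd_adapted : Adapted F d)
    (htangent : ∀ n : ℕ, 1 ≤ n → ∀ t : ℝ,
      μ[Set.indicator {x | t ≤ e n x} (fun _ => (1 : ℝ)) | F (n - 1)] =ᵐ[μ]
        μ[Set.indicator {x | t ≤ d n x} (fun _ => (1 : ℝ)) | F (n - 1)])
    (p : ℝ) (hp0 : 0 < p) (hp1 : p ≤ 1) :
    ∫⁻ x, (∑' n : ℕ, ENNReal.ofReal (e (n + 1) x)) ^ p ∂μ ≤
      6 * ∫⁻ x, (∑' n : ℕ, ENNReal.ofReal (d (n + 1) x)) ^ p ∂μ := by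
  classical
  set a : ℕ → Ω → ℝ≥0∞ := fun n x => ENNReal.ofReal (e (n + 1) x) with ha_def
  set b : ℕ → Ω → ℝ≥0∞ := fun n x => ENNReal.ofReal (d (n + 1) x) with hb_def
  have heM : ∀ k, Measurable (e k) := fun k => ((he_adapted k).mono (F.le k) le_rfl)
  have hdM : ∀ k, Measurable (d k) := fun k => ((hd_adapted k).mono (F.le k) le_rfl)
  have haF : ∀ i n, i < n → Measurable[F n] (a i) := fun i n hin =>
    ENNReal.measurable_ofReal.comp ((he_adapted (i + 1)).mono (F.mono hin) le_rfl)
  have hbF : ∀ i n, i < n → Measurable[F n] (b i) := fun i n hin =>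
    ENNReal.measurable_ofReal.comp ((hd_adapted (i + 1)).mono (F.mono hin) le_rfl)
  have ha0 : ∀ i, Measurable (a i) := fun i => ENNReal.measurable_ofReal.comp (heM (i + 1))
  have hb0 : ∀ i, Measurable (b i) := fun i => ENNReal.measurable_ofReal.comp (hdM (i + 1))
  -- measure equality from tangency
  have hmeasμ : ∀ n (G : Set Ω), MeasurableSet[F n] G → ∀ t : ℝ,
      μ ({x | t ≤ e (n + 1) x} ∩ G) = μ ({x | t ≤ d (n + 1) x} ∩ G) := by
    intro n G hG t
    have hGm : MeasurableSet G := F.le n _ hG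
    have hse : MeasurableSet {x | t ≤ e (n + 1) x} :=
      measurableSet_le measurable_const (heM (n + 1))
    have hsd : MeasurableSet {x | t ≤ d (n + 1) x} :=
      measurableSet_le measurable_const (hdM (n + 1))
    have hie : Integrable (Set.indicator {x | t ≤ e (n + 1) x} (fun _ => (1 : ℝ))) μ :=
      (integrable_const 1).indicator hse
    have hid : Integrable (Set.indicator {x | t ≤ d (n + 1) x} (fun _ => (1 : ℝ))) μ :=
      (integrable_const 1).indicator hsd
    have h1 := htangent (n + 1) (Nat.le_add_left 1 n) t
    have h2 : ∫ x in G, Set.indicator {x | t ≤ e (n + 1) x} (fun _ => (1 : ℝ)) x ∂μ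
        = ∫ x in G, Set.indicator {x | t ≤ d (n + 1) x} (fun _ => (1 : ℝ)) x ∂μ := by
      rw [← setIntegral_condExp (F.le n) hie hG, ← setIntegral_condExp (F.le n) hid hG]
      exact integral_congr_ae (ae_restrict_of_ae h1)
    rw [setIntegral_indicator hse, setIntegral_indicator hsd, inter_comm G _, inter_comm G _,
      setIntegral_const, setIntegral_const, smul_eq_mul, smul_eq_mul, mul_one, mul_one] at h2
    exact (ENNReal.toReal_eq_toReal_iff' (measure_ne_top μ _) (measure_ne_top μ _)).1 h2
  -- key set-lintegral equality for truncated variables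
  have hkey : ∀ (l : ℝ), 0 ≤ l → ∀ n (G : Set Ω), MeasurableSet[F n] G →
      ∫⁻ x in G, min (a n x) (ENNReal.ofReal l) ∂μ
        = ∫⁻ x in G, min (b n x) (ENNReal.ofReal l) ∂μ := by
    intro l hl n G hG
    have hGm : MeasurableSet G := F.le n _ hG
    have hmono : Monotone (fun r : ℝ => ENNReal.ofReal r) := fun _ _ h =>
      ENNReal.ofReal_le_ofReal h
    have he' : ∀ x, min (a n x) (ENNReal.ofReal l) = ENNReal.ofReal (min (e (n + 1) x) l) :=
      fun x => (hmono.map_min).symm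
    have hd' : ∀ x, min (b n x) (ENNReal.ofReal l) = ENNReal.ofReal (min (d (n + 1) x) l) :=
      fun x => (hmono.map_min).symm
    rw [lintegral_congr he', lintegral_congr hd',
      lintegral_eq_lintegral_meas_le (μ.restrict G)
        (ae_of_all _ fun x => le_min (he_nonneg (n + 1) x) hl)
        ((heM (n + 1)).min measurable_const).aemeasurable,
      lintegral_eq_lintegral_meas_le (μ.restrict G)
        (ae_of_all _ fun x => le_min (hd_nonneg (n + 1) x) hl)
        ((hdM (n + 1)).min measurable_const).aemeasurable]
    refine lintegral_congr fun t => ?_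
    rw [Measure.restrict_apply' hGm, Measure.restrict_apply' hGm]
    rcases le_or_gt t l with h | h
    · have hseteq : ∀ (f : ℕ → Ω → ℝ), {x | t ≤ min (f (n + 1) x) l} = {x | t ≤ f (n + 1) x} := by
        intro f; ext x; simp [le_min_iff, h]
      rw [hseteq e, hseteq d]
      exact hmeasμ n G hG t
    · have hseteq : ∀ (f : ℕ → Ω → ℝ), {x | t ≤ min (f (n + 1) x) l} = (∅ : Set Ω) := by
        intro f; ext x
        simp only [mem_setOf_eq, mem_empty_iff_false, iff_false, not_le]
        exact lt_of_le_of_lt (min_le_right _ _) h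
      rw [hseteq e, hseteq d]
  have hSmeas : Measurable (fun x => ∑' n, a n x) := Measurable.ennreal_tsum ha0
  have hTmeas : Measurable (fun x => ∑' n, b n x) := Measurable.ennreal_tsum hb0
  rcases hp1.lt_or_eq with hplt | hpeq
  · -- case p < 1
    rw [rep_int μ hp0 hplt _ hSmeas, rep_int μ hp0 hplt _ hTmeas]
    set C := ENNReal.ofReal (p * (1 - p)) with hC
    set IS := ∫⁻ l in Ioi (0:ℝ),
      (∫⁻ x, min (∑' n, a n x) (ENNReal.ofReal l) ∂μ) * ENNReal.ofReal (l ^ (p - 2)) with hIS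
    set IT := ∫⁻ l in Ioi (0:ℝ),
      (∫⁻ x, min (∑' n, b n x) (ENNReal.ofReal l) ∂μ) * ENNReal.ofReal (l ^ (p - 2)) with hIT
    have hmain : IS ≤ 3 * IT := by
      rw [hIS, hIT, ← lintegral_const_mul' 3 _ (by norm_num)]
      refine lintegral_mono_ae ((ae_restrict_iff' measurableSet_Ioi).2
        (ae_of_all _ fun l hl => ?_))
      calc (∫⁻ x, min (∑' n, a n x) (ENNReal.ofReal l) ∂μ) * ENNReal.ofReal (l ^ (p - 2))
          ≤ (3 * ∫⁻ x, min (∑' n, b n x) (ENNReal.ofReal l) ∂μ) * ENNReal.ofReal (l ^ (p - 2)) :=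
            mul_le_mul_left
              (step μ F a b haF hbF ha0 hb0 _ (ENNReal.ofReal_pos.2 hl) (hkey l hl.le)) _
      _ = 3 * ((∫⁻ x, min (∑' n, b n x) (ENNReal.ofReal l) ∂μ) * ENNReal.ofReal (l ^ (p - 2))) := by
            ring
    calc C * IS ≤ C * (3 * IT) := mul_le_mul_right hmain _
    _ = 3 * (C * IT) := by ring
    _ ≤ 6 * (C * IT) := mul_le_mul_left (by norm_num) _
  · -- case p = 1
    subst hpeq
    simp only [ENNReal.rpow_one]
    rw [lintegral_eq_iSup_min μ _ hSmeas]
    refine iSup_le fun n => ?_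
    have h3 : ∫⁻ x, min (∑' m, a m x) ((n : ℝ≥0∞)) ∂μ ≤ 3 * ∫⁻ x, ∑' m, b m x ∂μ := by
      rcases Nat.eq_zero_or_pos n with rfl | hn
      · have hz : ∀ x, min (∑' m, a m x) (((0:ℕ) : ℝ≥0∞)) = 0 := fun x => by simp
        rw [lintegral_congr hz, lintegral_zero]
        exact zero_le
      · have hkey' : ∀ m (G : Set Ω), MeasurableSet[F m] G →
            ∫⁻ x in G, min (a m x) ((n : ℝ≥0∞)) ∂μ = ∫⁻ x in G, min (b m x) ((n : ℝ≥0∞)) ∂μ := by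
          intro m G hG
          have h := hkey (n : ℝ) (Nat.cast_nonneg n) m G hG
          rwa [ENNReal.ofReal_natCast] at h
        have hstep := step μ F a b haF hbF ha0 hb0 ((n : ℝ≥0∞))
          (by exact_mod_cast hn) hkey'
        exact hstep.trans (mul_le_mul_right (lintegral_mono fun x => min_le_left _ _) 3)
    exact h3.trans (mul_le_mul_left (by norm_num) _)
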